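/- arXiv:1302.4315 — 4 statements merged into one kernel-verified Lean document; each statement's English description precedes it below -/
import Mathlib

section
/- The map f̃_a(u,v) := (γ_a(u+v) + γ_a(u−v))/2 is an immersion at every point (u,v) with v ∈ (0,π); i.e., the partial derivatives ∂f̃_a/∂u = (γ_a'(u+v)+γ_a'(u−v))/2 and ∂f̃_a/∂v = (γ_a'(u+v)−γ_a'(u−v))/2 are linearly independent whenever v is not an integer multiple of π. -/
open Real

noncomputable def xi (a t : ℝ) : ℝ :=
  2 / Real.sqrt (2 * Real.cos (4 * t) + (a ^ 4 + (a ^ 4)⁻¹))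

/-- The velocity `γ_a'(s) = ξ_a(s)·(1, −cos s, −sin s)` of the lightlike curve. -/
noncomputable def gam' (a : ℝ) (s : ℝ) : ℝ × ℝ × ℝ :=
  (xi a s, -(xi a s * Real.cos s), -(xi a s * Real.sin s))

lemma xi_pos (a : ℝ) (ha : a ∈ Set.Ioo (0:ℝ) 1) (t : ℝ) : 0 < xi a t := by
  obtain ⟨ha0, ha1⟩ := ha
  have hb0 : (0:ℝ) < a ^ 4 := by positivity
  have hb1 : a ^ 4 < 1 := pow_lt_one₀ ha0.le ha1 (by norm_num)
  have hinv : a ^ 4 * (a ^ 4)⁻¹ = 1 := mul_inv_cancel₀ hb0.ne'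
  have h2 : (0:ℝ) < 1 - a ^ 4 := by linarith
  have key : 0 < (1 - a ^ 4) * ((1 - a ^ 4) * (a ^ 4)⁻¹) :=
    mul_pos h2 (mul_pos h2 (inv_pos.2 hb0))
  have hsum : 2 < a ^ 4 + (a ^ 4)⁻¹ := by nlinarith [key, hinv, hb0]
  have hcos : -1 ≤ Real.cos (4 * t) := Real.neg_one_le_cos _
  have hpos : 0 < 2 * Real.cos (4 * t) + (a ^ 4 + (a ^ 4)⁻¹) := by nlinarith
  unfold xi
  positivity

theorem statement4 (a : ℝ) (ha : a ∈ Set.Ioo (0:ℝ) 1) (u v : ℝ)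
    (hv : ¬ ∃ n : ℤ, v = n * π) :
    LinearIndependent ℝ
      ![(1/2 : ℝ) • (gam' a (u + v) + gam' a (u - v)),
        (1/2 : ℝ) • (gam' a (u + v) - gam' a (u - v))] := by
  have hx : 0 < xi a (u + v) := xi_pos a ha (u + v)
  have hy : 0 < xi a (u - v) := xi_pos a ha (u - v)
  rw [LinearIndependent.pair_iff]
  intro c d hcd
  simp only [gam', Prod.smul_mk, Prod.mk_add_mk, Prod.mk_sub_mk, smul_eq_mul,
    Prod.ext_iff, Prod.fst_add, Prod.snd_add, Prod.fst_zero, Prod.snd_zero] at hcd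
  obtain ⟨h1, h2, h3⟩ := hcd
  have e1 : (c + d) / 2 * xi a (u + v) + (c - d) / 2 * xi a (u - v) = 0 := by
    linear_combination h1
  have e2 : (c + d) / 2 * xi a (u + v) * Real.cos (u + v)
      + (c - d) / 2 * xi a (u - v) * Real.cos (u - v) = 0 := by
    linear_combination -h2
  have e3 : (c + d) / 2 * xi a (u + v) * Real.sin (u + v)
      + (c - d) / 2 * xi a (u - v) * Real.sin (u - v) = 0 := by
    linear_combination -h3
  have hpz : (c + d) / 2 * xi a (u + v) = 0 := by
    by_contra hp0
    have hqp : (c - d) / 2 * xi a (u - v) = -((c + d) / 2 * xi a (u + v)) := by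
      linarith
    have hc : Real.cos (u + v) = Real.cos (u - v) := by
      have h : (c + d) / 2 * xi a (u + v) * (Real.cos (u + v) - Real.cos (u - v)) = 0 := by
        linear_combination e2 - Real.cos (u - v) * e1
      rcases mul_eq_zero.1 h with h | h
      · exact absurd h hp0
      · linarith
    have hsin : Real.sin (u + v) = Real.sin (u - v) := by
      have h : (c + d) / 2 * xi a (u + v) * (Real.sin (u + v) - Real.sin (u - v)) = 0 := by
        linear_combination e3 - Real.sin (u - v) * e1
      rcases mul_eq_zero.1 h with h | h
      · exact absurd h hp0
      · linarith
    have hcos1 : Real.cos (2 * v) = 1 := by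
      have heq : (2 : ℝ) * v = (u + v) - (u - v) := by ring
      rw [heq, Real.cos_sub, hc, hsin]
      nlinarith [Real.sin_sq_add_cos_sq (u - v)]
    obtain ⟨n, hn⟩ := (Real.cos_eq_one_iff _).1 hcos1
    exact hv ⟨n, by linarith⟩
  have hqz : (c - d) / 2 * xi a (u - v) = 0 := by linarith
  have hcd1 : c + d = 0 := by
    rcases mul_eq_zero.1 hpz with h | h
    · linarith
    · exact absurd h hx.ne'
  have hcd2 : c - d = 0 := by
    rcases mul_eq_zero.1 hqz with h | h
    · linarith
    · exact absurd h hy.ne'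
  constructor <;> linarith
end

section
/- For every u ∈ ℝ, ∂f̃_a/∂u (u, π/2) = ξ_a(u)·(1, 0, 0); consequently, the curve u ↦ f̃_a(u, π/2) is a straight line parallel to the x₀-axis. -/
open Real

noncomputable def gam (a : ℝ) (s : ℝ) : ℝ × ℝ × ℝ :=
  (∫ t in (0:ℝ)..s, xi a t,
   ∫ t in (0:ℝ)..s, -(xi a t * Real.cos t),
   ∫ t in (0:ℝ)..s, -(xi a t * Real.sin t))

noncomputable def ftilde (a : ℝ) (u v : ℝ) : ℝ × ℝ × ℝ :=
  (1/2 : ℝ) • (gam a (u + v) + gam a (u - v))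

lemma denom_pos {a : ℝ} (ha : a ∈ Set.Ioo (0:ℝ) 1) (t : ℝ) :
    0 < 2 * Real.cos (4 * t) + (a ^ 4 + (a ^ 4)⁻¹) := by
  obtain ⟨ha0, ha1⟩ := ha
  have hc : (0:ℝ) < a ^ 4 := by positivity
  have hc1 : a ^ 4 < 1 := pow_lt_one₀ ha0.le ha1 (by norm_num)
  have key : 2 < a ^ 4 + (a ^ 4)⁻¹ := by
    have h : 0 < (1 - a ^ 4) ^ 2 / a ^ 4 := div_pos (pow_pos (by linarith) 2) hc
    have : (1 - a ^ 4) ^ 2 / a ^ 4 = a ^ 4 + (a ^ 4)⁻¹ - 2 := by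
      field_simp; ring
    linarith [this ▸ h]
  have := Real.neg_one_le_cos (4 * t)
  linarith

lemma xi_cont {a : ℝ} (ha : a ∈ Set.Ioo (0:ℝ) 1) : Continuous (xi a) := by
  apply continuous_const.div
  · exact (Real.continuous_sqrt.comp (by continuity))
  · intro t
    exact ne_of_gt (Real.sqrt_pos.mpr (denom_pos ha t))

lemma gam_hasDerivAt {a : ℝ} (ha : a ∈ Set.Ioo (0:ℝ) 1) (s : ℝ) :
    HasDerivAt (gam a) (xi a s, -(xi a s * Real.cos s), -(xi a s * Real.sin s)) s := by
  have h1 : HasDerivAt (fun s => ∫ t in (0:ℝ)..s, xi a t) (xi a s) s :=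
    ((xi_cont ha).integral_hasStrictDerivAt 0 s).hasDerivAt
  have h2 : HasDerivAt (fun s => ∫ t in (0:ℝ)..s, -(xi a t * Real.cos t))
      (-(xi a s * Real.cos s)) s :=
    (((xi_cont ha).mul Real.continuous_cos).neg.integral_hasStrictDerivAt 0 s).hasDerivAt
  have h3 : HasDerivAt (fun s => ∫ t in (0:ℝ)..s, -(xi a t * Real.sin t))
      (-(xi a s * Real.sin s)) s :=
    (((xi_cont ha).mul Real.continuous_sin).neg.integral_hasStrictDerivAt 0 s).hasDerivAt
  exact h1.prodMk (h2.prodMk h3)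

lemma xi_periodic (a u : ℝ) : xi a (u + π / 2) = xi a u ∧ xi a (u - π / 2) = xi a u := by
  constructor <;> unfold xi <;> congr 2
  · rw [show 4 * (u + π / 2) = 4 * u + 2 * π by ring, Real.cos_add_two_pi]
  · rw [show 4 * (u - π / 2) = 4 * u - 2 * π by ring, Real.cos_sub_two_pi]

theorem statement6 (a : ℝ) (ha : a ∈ Set.Ioo (0:ℝ) 1) :
    (∀ u : ℝ, HasDerivAt (fun u' => ftilde a u' (π / 2)) (xi a u, 0, 0) u) ∧
    (∀ u : ℝ, (ftilde a u (π / 2)).2 = (ftilde a 0 (π / 2)).2) := by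
  have hmain : ∀ u : ℝ, HasDerivAt (fun u' => ftilde a u' (π / 2)) (xi a u, 0, 0) u := by
    intro u
    have hp : HasDerivAt (fun u' : ℝ => u' + π / 2) 1 u := (hasDerivAt_id u).add_const _
    have hm : HasDerivAt (fun u' : ℝ => u' - π / 2) 1 u := (hasDerivAt_id u).sub_const _
    have h1 := (gam_hasDerivAt ha (u + π / 2)).scomp u hp
    have h2 := (gam_hasDerivAt ha (u - π / 2)).scomp u hm
    have h := ((h1.add h2).const_smul ((1:ℝ)/2))
    convert h using 1
    · rfl
    · rfl
    · rfl
    · rfl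
    obtain ⟨hxp, hxm⟩ := xi_periodic a u
    simp only [one_smul, hxp, hxm, Real.cos_add_pi_div_two, Real.cos_sub_pi_div_two,
      Real.sin_add_pi_div_two, Real.sin_sub_pi_div_two, Prod.smul_mk, Prod.mk_add_mk,
      smul_eq_mul]
    ext <;> simp <;> ring
  refine ⟨hmain, ?_⟩
  have hsnd : ∀ u : ℝ, HasDerivAt (fun u' : ℝ => (ftilde a u' (π / 2)).2) ((0:ℝ), (0:ℝ)) u := by
    intro u
    exact (hmain u).snd
  intro u
  apply is_const_of_deriv_eq_zero (fun x => (hsnd x).differentiableAt) 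
  intro x
  rw [(hsnd x).deriv]; rfl
end

section
/- For every v ∈ ℝ, ∂f̃_a/∂v (π/4, v) = (√2 · sin v / √(−2cos 4v + a⁴ + a⁻⁴))·(0, 1, −1); hence the curve v ↦ f̃_a(π/4, v) for 0 < v < π traces a line segment parallel to the line {x₀ = 0, x₁ + x₂ = 0}. -/
open Real

theorem statement8 (a : ℝ) (ha : a ∈ Set.Ioo (0:ℝ) 1) :
    (∀ v : ℝ, HasDerivAt (fun v' => ftilde a (π / 4) v')
      ((Real.sqrt 2 * Real.sin v /
          Real.sqrt (-2 * Real.cos (4 * v) + (a ^ 4 + (a ^ 4)⁻¹))) •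
        ((0:ℝ), (1:ℝ), (-1:ℝ))) v) ∧
    (∀ v ∈ Set.Ioo 0 π, (ftilde a (π / 4) v).1 = (ftilde a (π / 4) (π / 2)).1 ∧
      (ftilde a (π / 4) v).2.1 + (ftilde a (π / 4) v).2.2
        = (ftilde a (π / 4) (π / 2)).2.1 + (ftilde a (π / 4) (π / 2)).2.2) := by
  obtain ⟨ha0, ha1⟩ := ha
  set A : ℝ := a ^ 4 + (a ^ 4)⁻¹ with hAdef
  have ha4 : 0 < a ^ 4 := by positivity
  have ha4lt : a ^ 4 < 1 := pow_lt_one₀ (le_of_lt ha0) ha1 (by norm_num)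
  have hA : 2 < A := by
    have hne : a ^ 4 - 1 ≠ 0 := sub_ne_zero.mpr (ne_of_lt ha4lt)
    have hpos : 0 < (a ^ 4 - 1) ^ 2 := by positivity
    rw [hAdef, ← sub_pos]
    have h2 : a ^ 4 + (a ^ 4)⁻¹ - 2 = (a ^ 4 - 1) ^ 2 / a ^ 4 := by
      field_simp; ring
    rw [h2]
    exact div_pos hpos ha4
  have hden : ∀ t : ℝ, 0 < 2 * Real.cos (4 * t) + A := by
    intro t
    nlinarith [Real.neg_one_le_cos (4 * t)]
  have hdenv : ∀ v : ℝ, 0 < -2 * Real.cos (4 * v) + A := by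
    intro v
    nlinarith [Real.cos_le_one (4 * v)]
  -- continuity of the integrands
  have hsq : ∀ t : ℝ, Real.sqrt (2 * Real.cos (4 * t) + A) ≠ 0 :=
    fun t => ne_of_gt (Real.sqrt_pos.mpr (hden t))
  have hcont : Continuous (xi a) := by
    unfold xi
    exact continuous_const.div
      (Real.continuous_sqrt.comp (by continuity)) hsq
  have hcont2 : Continuous (fun t => -(xi a t * Real.cos t)) := by continuity
  have hcont3 : Continuous (fun t => -(xi a t * Real.sin t)) := by continuity
  -- FTC
  have key : ∀ (f : ℝ → ℝ), Continuous f → ∀ s : ℝ,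
      HasDerivAt (fun x => ∫ t in (0:ℝ)..x, f t) (f s) s := by
    intro f hf s
    exact intervalIntegral.integral_hasDerivAt_right
      (hf.intervalIntegrable 0 s)
      (hf.stronglyMeasurableAtFilter _ _)
      hf.continuousAt
  have hgam : ∀ s : ℝ, HasDerivAt (gam a)
      (xi a s, -(xi a s * Real.cos s), -(xi a s * Real.sin s)) s := by
    intro s
    exact (key _ hcont s).prodMk ((key _ hcont2 s).prodMk (key _ hcont3 s))
  have hmain : ∀ v : ℝ, HasDerivAt (fun v' => ftilde a (π / 4) v')
      ((Real.sqrt 2 * Real.sin v /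
          Real.sqrt (-2 * Real.cos (4 * v) + A)) •
        ((0:ℝ), (1:ℝ), (-1:ℝ))) v := by
    intro v
    have hplus : HasDerivAt (fun v' : ℝ => π / 4 + v') 1 v := by
      simpa using (hasDerivAt_id v).const_add (π / 4)
    have hminus : HasDerivAt (fun v' : ℝ => π / 4 - v') (-1) v := by
      simpa using (hasDerivAt_id v).const_sub (π / 4)
    have h1 : HasDerivAt (fun v' => gam a (π / 4 + v'))
        ((1:ℝ) • (xi a (π / 4 + v), -(xi a (π / 4 + v) * Real.cos (π / 4 + v)),
          -(xi a (π / 4 + v) * Real.sin (π / 4 + v)))) v :=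
      (hgam (π / 4 + v)).scomp v hplus
    have h2 : HasDerivAt (fun v' => gam a (π / 4 - v'))
        ((-1:ℝ) • (xi a (π / 4 - v), -(xi a (π / 4 - v) * Real.cos (π / 4 - v)),
          -(xi a (π / 4 - v) * Real.sin (π / 4 - v)))) v :=
      (hgam (π / 4 - v)).scomp v hminus
    have h3 := ((h1.add h2).const_smul (1/2 : ℝ))
    have heq : (fun v' => ftilde a (π / 4) v') =
        fun v' => (1/2 : ℝ) • (gam a (π / 4 + v') + gam a (π / 4 - v')) := by
      funext v'; rfl
    rw [heq]
    refine h3.congr_deriv (Eq.symm ?_)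
    -- now prove the vector identity
    have hxp : xi a (π / 4 + v) = 2 / Real.sqrt (-2 * Real.cos (4 * v) + A) := by
      unfold xi
      rw [hAdef]
      congr 2
      have : 4 * (π / 4 + v) = π - (-(4 * v)) := by ring
      rw [this, Real.cos_pi_sub, Real.cos_neg]
      ring
    have hxm : xi a (π / 4 - v) = 2 / Real.sqrt (-2 * Real.cos (4 * v) + A) := by
      unfold xi
      rw [hAdef]
      congr 2
      have : 4 * (π / 4 - v) = π - 4 * v := by ring
      rw [this, Real.cos_pi_sub]
      ring
    set sD : ℝ := Real.sqrt (-2 * Real.cos (4 * v) + A) with hsD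
    have hsD0 : sD ≠ 0 := ne_of_gt (Real.sqrt_pos.mpr (hdenv v))
    rw [hxp, hxm]
    have hcp : Real.cos (π / 4 + v) = Real.sqrt 2 / 2 * Real.cos v
        - Real.sqrt 2 / 2 * Real.sin v := by
      rw [Real.cos_add, Real.cos_pi_div_four, Real.sin_pi_div_four]
    have hcm : Real.cos (π / 4 - v) = Real.sqrt 2 / 2 * Real.cos v
        + Real.sqrt 2 / 2 * Real.sin v := by
      rw [Real.cos_sub, Real.cos_pi_div_four, Real.sin_pi_div_four]
    have hsp : Real.sin (π / 4 + v) = Real.sqrt 2 / 2 * Real.cos v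
        + Real.sqrt 2 / 2 * Real.sin v := by
      rw [Real.sin_add, Real.cos_pi_div_four, Real.sin_pi_div_four]
    have hsm : Real.sin (π / 4 - v) = Real.sqrt 2 / 2 * Real.cos v
        - Real.sqrt 2 / 2 * Real.sin v := by
      rw [Real.sin_sub, Real.cos_pi_div_four, Real.sin_pi_div_four]
    rw [hcp, hcm, hsp, hsm]
    simp only [Prod.smul_mk, Prod.mk_add_mk, smul_eq_mul, Prod.mk.injEq]
    refine ⟨by ring, by field_simp; ring, by field_simp; ring⟩
  refine ⟨hmain, ?_⟩
  intro v hv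
  constructor
  · have hd : ∀ x : ℝ, HasDerivAt (fun v' => (ftilde a (π / 4) v').1) 0 x := by
      intro x
      have := (ContinuousLinearMap.fst ℝ ℝ (ℝ × ℝ)).hasFDerivAt.comp_hasDerivAt x (hmain x)
      simp at this; exact this
    exact is_const_of_deriv_eq_zero (fun x => (hd x).differentiableAt)
      (fun x => (hd x).deriv) v (π / 2)
  · have hd : ∀ x : ℝ, HasDerivAt
        (fun v' => (ftilde a (π / 4) v').2.1 + (ftilde a (π / 4) v').2.2) 0 x := by
      intro x
      have L := ((ContinuousLinearMap.fst ℝ ℝ ℝ + ContinuousLinearMap.snd ℝ ℝ ℝ).comp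
        (ContinuousLinearMap.snd ℝ ℝ (ℝ × ℝ))).hasFDerivAt.comp_hasDerivAt x (hmain x)
      simp at L; exact L
    exact is_const_of_deriv_eq_zero (fun x => (hd x).differentiableAt)
      (fun x => (hd x).deriv) v (π / 2)
end

section
/- For a ∈ (0,1) and b := a⁴ + a⁻⁴, the integral identity ∫₀^∞ 4 ds/√((b+2)s⁴ + 2(b−6)s² + b+2) = ∫_{−π/2}^{π/2} 2 dt/√(2cos 4t + b) holds (both sides defining the positive real period q₃(a)). -/
open Real MeasureTheory

theorem statement19 (a : ℝ) (ha : a ∈ Set.Ioo (0:ℝ) 1) (b : ℝ)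
    (hb : b = a ^ 4 + (a ^ 4)⁻¹) :
    (∫ s in Set.Ioi (0:ℝ),
        4 / Real.sqrt ((b + 2) * s ^ 4 + 2 * (b - 6) * s ^ 2 + (b + 2)))
      = ∫ t in (-(π / 2))..(π / 2), 2 / Real.sqrt (2 * Real.cos (4 * t) + b) := by
  obtain ⟨ha0, ha1⟩ := ha
  have ha4 : 0 < a ^ 4 := by positivity
  have ha41 : a ^ 4 < 1 := pow_lt_one₀ ha0.le ha1 (by norm_num)
  have hb2 : 2 < b := by
    have h1 : a ^ 4 * (b - 2) = (a ^ 4 - 1) ^ 2 := by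
      rw [hb, mul_sub, mul_add, mul_inv_cancel₀ ha4.ne']; ring
    nlinarith [sq_nonneg (a ^ 4 - 1)]
  have hbpos : ∀ t : ℝ, 0 < 2 * Real.cos (4 * t) + b := by
    intro t
    nlinarith [Real.neg_one_le_cos (4 * t)]
  -- substitution: Ioi 0 = tan '' Ioo 0 (π/2)
  have himg : Set.Ioi (0:ℝ) = Real.tan '' Set.Ioo 0 (π / 2) := by
    ext x
    simp only [Set.mem_Ioi, Set.mem_image, Set.mem_Ioo]
    constructor
    · intro hx
      refine ⟨Real.arctan x, ⟨?_, Real.arctan_lt_pi_div_two x⟩, Real.tan_arctan x⟩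
      have := Real.arctan_strictMono hx
      simpa using this
    · rintro ⟨t, ⟨ht0, ht1⟩, rfl⟩
      exact Real.tan_pos_of_pos_of_lt_pi_div_two ht0 ht1
  have hsub : Set.Ioo (0:ℝ) (π / 2) ⊆ Set.Ioo (-(π / 2)) (π / 2) := by
    intro t ht
    exact ⟨by linarith [ht.1, pi_pos], ht.2⟩
  have hderiv : ∀ t ∈ Set.Ioo (0:ℝ) (π / 2),
      HasDerivWithinAt Real.tan (1 / Real.cos t ^ 2) (Set.Ioo (0:ℝ) (π / 2)) t := by
    intro t ht
    exact (Real.hasDerivAt_tan (ne_of_gt (Real.cos_pos_of_mem_Ioo (hsub ht)))).hasDerivWithinAt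
  have hinj : Set.InjOn Real.tan (Set.Ioo (0:ℝ) (π / 2)) := Real.injOn_tan.mono hsub
  rw [himg, MeasureTheory.integral_image_eq_integral_abs_deriv_smul measurableSet_Ioo hderiv hinj]
  -- pointwise rewrite of the substituted integrand
  have hptw : ∀ t ∈ Set.Ioo (0:ℝ) (π / 2),
      |1 / Real.cos t ^ 2| •
        (4 / Real.sqrt ((b + 2) * Real.tan t ^ 4 + 2 * (b - 6) * Real.tan t ^ 2 + (b + 2)))
      = 4 / Real.sqrt (2 * Real.cos (4 * t) + b) := by
    intro t ht
    have hc : 0 < Real.cos t := Real.cos_pos_of_mem_Ioo (hsub ht)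
    have h4 : Real.cos (4 * t) = 2 * (2 * Real.cos t ^ 2 - 1) ^ 2 - 1 := by
      rw [show (4:ℝ) * t = 2 * (2 * t) by ring, Real.cos_two_mul, Real.cos_two_mul]
    have hs : Real.sin t ^ 2 = 1 - Real.cos t ^ 2 := by
      nlinarith [Real.sin_sq_add_cos_sq t]
    have key : (b + 2) * Real.tan t ^ 4 + 2 * (b - 6) * Real.tan t ^ 2 + (b + 2)
        = (2 * Real.cos (4 * t) + b) / Real.cos t ^ 4 := by
      have hT2 : Real.tan t ^ 2 = (1 - Real.cos t ^ 2) / Real.cos t ^ 2 := by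
        rw [Real.tan_eq_sin_div_cos, div_pow, hs]
      have hT4 : Real.tan t ^ 4 = ((1 - Real.cos t ^ 2) / Real.cos t ^ 2) ^ 2 := by
        rw [show Real.tan t ^ 4 = (Real.tan t ^ 2) ^ 2 by ring, hT2]
      rw [hT4, hT2, h4]
      field_simp
      ring
    rw [key]
    have hB : 0 < 2 * Real.cos (4 * t) + b := hbpos t
    have hsq : Real.sqrt ((2 * Real.cos (4 * t) + b) / Real.cos t ^ 4)
        = Real.sqrt (2 * Real.cos (4 * t) + b) / Real.cos t ^ 2 := by
      rw [Real.sqrt_div hB.le, show Real.cos t ^ 4 = (Real.cos t ^ 2) ^ 2 by ring,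
        Real.sqrt_sq (by positivity)]
    rw [hsq, abs_of_pos (by positivity), smul_eq_mul]
    have hsB : 0 < Real.sqrt (2 * Real.cos (4 * t) + b) := Real.sqrt_pos.2 hB
    field_simp
  rw [MeasureTheory.setIntegral_congr_fun measurableSet_Ioo hptw]
  -- now the right-hand side
  have hcont : Continuous fun t : ℝ => 2 / Real.sqrt (2 * Real.cos (4 * t) + b) := by
    have h1 : Continuous fun t : ℝ => 2 * Real.cos (4 * t) + b :=
      (continuous_const.mul (Real.continuous_cos.comp (continuous_const.mul continuous_id))).add
        continuous_const
    exact continuous_const.div (Real.continuous_sqrt.comp h1)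
      fun t => (Real.sqrt_pos.2 (hbpos t)).ne'
  have hint : ∀ u v : ℝ, IntervalIntegrable
      (fun t => 2 / Real.sqrt (2 * Real.cos (4 * t) + b)) volume u v :=
    fun u v => hcont.intervalIntegrable u v
  have hsplit : (∫ t in (-(π / 2))..(π / 2), 2 / Real.sqrt (2 * Real.cos (4 * t) + b))
      = (∫ t in (-(π / 2))..(0:ℝ), 2 / Real.sqrt (2 * Real.cos (4 * t) + b))
        + ∫ t in (0:ℝ)..(π / 2), 2 / Real.sqrt (2 * Real.cos (4 * t) + b) := by
    exact (intervalIntegral.integral_add_adjacent_intervals (hint _ _) (hint _ _)).symm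
  have heven : (∫ t in (-(π / 2))..(0:ℝ), 2 / Real.sqrt (2 * Real.cos (4 * t) + b))
      = ∫ t in (0:ℝ)..(π / 2), 2 / Real.sqrt (2 * Real.cos (4 * t) + b) := by
    have := intervalIntegral.integral_comp_neg
      (a := (0:ℝ)) (b := π / 2) (fun t => 2 / Real.sqrt (2 * Real.cos (4 * t) + b))
    rw [neg_zero] at this
    rw [← this]
    congr 1
    ext t
    rw [show (4:ℝ) * -t = -(4 * t) by ring, Real.cos_neg]
  rw [hsplit, heven]
  rw [intervalIntegral.integral_of_le (by positivity : (0:ℝ) ≤ π / 2),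
    MeasureTheory.integral_Ioc_eq_integral_Ioo]
  have hIOn : MeasureTheory.IntegrableOn
      (fun t => 2 / Real.sqrt (2 * Real.cos (4 * t) + b)) (Set.Ioo 0 (π / 2)) volume :=
    ((hint 0 (π / 2)).1.mono_set Set.Ioo_subset_Ioc_self)
  have h42 : ∀ t : ℝ, 4 / Real.sqrt (2 * Real.cos (4 * t) + b)
      = 2 / Real.sqrt (2 * Real.cos (4 * t) + b) + 2 / Real.sqrt (2 * Real.cos (4 * t) + b) :=
    fun t => by ring
  simp_rw [h42]
  rw [MeasureTheory.integral_add hIOn hIOn]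
end
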